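/- For all integers t ≥ 1 and k ≥ t+1 there exists an integer N = f(k,t) (depending only on k and t) such that for every n ≥ N and every t-intersecting family F ⊆ binom([n],k), the number of distinct intersections satisfies |I(F)| ≤ |I(A_t)|, where A_t = {A ∈ binom([n],k) : |A ∩ {1,…,t+2}| ≥ t+1}. -/

import Mathlib

open Finset

/-- The collection of distinct intersections `{F ∩ G : F, G ∈ 𝓕, F ≠ G}`. -/
def interFam (F : Finset (Finset ℕ)) : Finset (Finset ℕ) :=
  ((F ×ˢ F).filter fun p => p.1 ≠ p.2).image fun p => p.1 ∩ p.2

/-- A family is `t`-intersecting if any two members meet in at least `t` elements. -/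
def tIntersecting (t : ℕ) (F : Finset (Finset ℕ)) : Prop :=
  ∀ A ∈ F, ∀ B ∈ F, t ≤ (A ∩ B).card

/-- The family `𝓐_t = {A ∈ [n]^(k) : |A ∩ {1,…,t+2}| ≥ t+1}`. -/
def At (n k t : ℕ) : Finset (Finset ℕ) :=
  ((Finset.Icc 1 n).powersetCard k).filter fun A => t + 1 ≤ (A ∩ Finset.Icc 1 (t + 2)).card

/-- A `t`-intersecting family `F ⊆ [n]^(k)` is saturated if no `k`-set outside `F`
can be added keeping the `t`-intersecting property. -/
def saturated (n k t : ℕ) (F : Finset (Finset ℕ)) : Prop :=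
  ∀ G ∈ (Finset.Icc 1 n).powersetCard k, G ∉ F → ¬ tIntersecting t (insert G F)

/-- The family of `t`-transversals `T(F)`. -/
def transv (n k t : ℕ) (F : Finset (Finset ℕ)) : Finset (Finset ℕ) :=
  (Finset.Icc 1 n).powerset.filter fun T => T.card ≤ k ∧ ∀ A ∈ F, t ≤ (T ∩ A).card

/-- The minimal members (under inclusion) of a family. -/
def minFam (S : Finset (Finset ℕ)) : Finset (Finset ℕ) :=
  S.filter fun B => ∀ B' ∈ S, B' ⊆ B → B' = B

def TransOf (t : ℕ) (S : Finset (Finset ℕ)) (T : Finset ℕ) : Prop :=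
  ∀ A ∈ S, t ≤ (T ∩ A).card

def Xset (n k t : ℕ) (Y : Finset ℕ) : Finset (Finset ℕ) :=
  (Finset.Icc 1 n).powerset.filter (fun I => t ≤ (I ∩ Y).card ∧ I.card + 1 ≤ k)

lemma card_Icc_one (m : ℕ) : (Finset.Icc 1 m).card = m := by
  rw [Nat.card_Icc]; omega



lemma mem_interFam {F : Finset (Finset ℕ)} {I : Finset ℕ} :
    I ∈ interFam F ↔ ∃ A ∈ F, ∃ B ∈ F, A ≠ B ∧ A ∩ B = I := by
  simp only [interFam, mem_image, mem_filter, mem_product]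
  constructor
  · rintro ⟨⟨A, B⟩, ⟨⟨hA, hB⟩, hne⟩, rfl⟩
    exact ⟨A, hA, B, hB, hne, rfl⟩
  · rintro ⟨A, hA, B, hB, hne, rfl⟩
    exact ⟨⟨A, B⟩, ⟨⟨hA, hB⟩, hne⟩, rfl⟩

lemma interFam_mono {F G : Finset (Finset ℕ)} (h : F ⊆ G) : interFam F ⊆ interFam G := by
  intro I hI
  rw [mem_interFam] at hI ⊢
  obtain ⟨A, hA, B, hB, hne, rfl⟩ := hI
  exact ⟨A, h hA, B, h hB, hne, rfl⟩

/-- intersection of two distinct k-sets has card < k -/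
lemma card_inter_lt_of_ne {A B : Finset ℕ} {k : ℕ} (hA : A.card = k) (hB : B.card = k)
    (hne : A ≠ B) : (A ∩ B).card + 1 ≤ k := by
  rcases lt_or_ge ((A ∩ B).card) k with h | h
  · omega
  · exfalso
    have h1 : A ∩ B ⊆ A := inter_subset_left
    have h2 : A ∩ B ⊆ B := inter_subset_right
    have e1 : A ∩ B = A := eq_of_subset_of_card_le h1 (by omega)
    have e2 : A ∩ B = B := eq_of_subset_of_card_le h2 (by omega)
    exact hne (e1 ▸ e2)

/-- counting subsets of bounded size -/
lemma card_powerset_filter_card_le (U : Finset ℕ) (c : ℕ) :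
    ((U.powerset.filter fun Z => Z.card ≤ c)).card = ∑ z ∈ Finset.range (c+1), U.card.choose z := by
  have : (U.powerset.filter fun Z => Z.card ≤ c) =
      (Finset.range (c+1)).biUnion (fun z => U.powersetCard z) := by
    ext Z
    simp only [mem_filter, mem_powerset, mem_biUnion, mem_range, Finset.mem_powersetCard]
    constructor
    · rintro ⟨h1, h2⟩; exact ⟨Z.card, by omega, h1, rfl⟩
    · rintro ⟨z, hz, h1, rfl⟩; exact ⟨h1, by omega⟩
  rw [this, card_biUnion, ]
  · simp [Finset.card_powersetCard]
  · intro x hx y hy hxy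
    rw [Function.onFun, Finset.disjoint_left]
    intro Z hZ1 hZ2
    rw [Finset.mem_powersetCard] at hZ1 hZ2
    omega

/-- choose is monotone in the lower index on the first half -/
lemma choose_mono_right (a : ℕ) {i j : ℕ} (hij : i ≤ j) (hj : 2 * j + 2 ≤ a) :
    a.choose i ≤ a.choose j := by
  induction j with
  | zero =>
    have : i = 0 := by omega
    subst this; exact le_rfl
  | succ m ih =>
    rcases Nat.eq_or_lt_of_le hij with rfl | hlt
    · exact le_rfl
    · calc a.choose i ≤ a.choose m := ih (by omega) (by omega)
        _ ≤ a.choose (m+1) := Nat.choose_le_succ_of_lt_half_left (by omega)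

lemma four_mul_choose_le (a z : ℕ) (h : 5 * (z + 1) ≤ a) :
    4 * a.choose z ≤ a.choose (z + 1) := by
  have hid := Nat.choose_succ_right_eq a z
  -- a.choose (z+1) * (z+1) = a.choose z * (a - z)
  have h4 : 4 * (z + 1) ≤ a - z := by omega
  have : 4 * a.choose z * (z+1) ≤ a.choose z * (a - z) := by
    calc 4 * a.choose z * (z+1) = a.choose z * (4 * (z+1)) := by ring
      _ ≤ a.choose z * (a - z) := Nat.mul_le_mul_left _ h4
  rw [← hid] at this
  exact Nat.le_of_mul_le_mul_right this (by omega)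

lemma choose_succ_le_two_mul (a z : ℕ) (h : 5 * (z + 1) ≤ a) :
    (a + 1).choose z ≤ 2 * a.choose z := by
  cases z with
  | zero => simp
  | succ y =>
    rw [Nat.choose_succ_succ]
    simp only [Nat.succ_eq_add_one]
    have h4 : 4 * a.choose y ≤ a.choose (y+1) := four_mul_choose_le a y (by omega)
    omega

lemma choose_add_le_pow_mul (d a z : ℕ) (h : 5 * (z + 1) + d ≤ a) :
    (a + d).choose z ≤ 2 ^ d * a.choose z := by
  induction d with
  | zero => simpa using le_rfl
  | succ e ih =>
    have h1 : (a + (e+1)) = (a + e) + 1 := by ring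
    rw [h1]
    calc ((a+e)+1).choose z ≤ 2 * (a+e).choose z :=
          choose_succ_le_two_mul (a+e) z (by omega)
      _ ≤ 2 * (2^e * a.choose z) := Nat.mul_le_mul_left _ (ih (by omega))
      _ = 2^(e+1) * a.choose z := by ring

/-- the key factor-2 comparison: C(a+2,z) ≤ 2 C(a,z) -/
lemma choose_add_two_le (a z : ℕ) (h : 5 * (z + 1) ≤ a) :
    (a + 2).choose z ≤ 2 * a.choose z := by
  match z, h with
  | 0, h => simp
  | 1, h => simp [Nat.choose_one_right]; omega
  | (y+2), h =>
    have e1 : (a+2).choose (y+2) = a.choose y + 2 * a.choose (y+1) + a.choose (y+2) := by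
      rw [show a + 2 = (a+1)+1 by ring, Nat.choose_succ_succ (a+1) (y+1),
        Nat.choose_succ_succ a y, Nat.choose_succ_succ a (y+1)]
      ring
    have h1 : 4 * a.choose y ≤ a.choose (y+1) := four_mul_choose_le a y (by omega)
    have h2 : 4 * a.choose (y+1) ≤ a.choose (y+2) := four_mul_choose_le a (y+1) (by omega)
    omega


lemma card_powerset_filter_card_add_le (U : Finset ℕ) (a k : ℕ) :
    ((U.powerset.filter fun Z => Z.card + a ≤ k)).card
      = ∑ z ∈ Finset.range (k+1-a), U.card.choose z := by
  have : (U.powerset.filter fun Z => Z.card + a ≤ k) =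
      (Finset.range (k+1-a)).biUnion (fun z => U.powersetCard z) := by
    ext Z
    simp only [mem_filter, mem_powerset, mem_biUnion, mem_range, Finset.mem_powersetCard]
    constructor
    · rintro ⟨h1, h2⟩; exact ⟨Z.card, by omega, h1, rfl⟩
    · rintro ⟨z, hz, h1, rfl⟩; exact ⟨h1, by omega⟩
  rw [this, card_biUnion]
  · simp [Finset.card_powersetCard]
  · intro x hx y hy hxy
    rw [Function.onFun, Finset.disjoint_left]
    intro Z hZ1 hZ2
    rw [Finset.mem_powersetCard] at hZ1 hZ2
    omega

lemma sum_choose_add_two_le (a m : ℕ) (h : 5 * (m + 1) ≤ a) :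
    ∑ z ∈ Finset.range (m+1), (a+2).choose z ≤ 2 * ∑ z ∈ Finset.range (m+1), a.choose z := by
  rw [Finset.mul_sum]
  apply Finset.sum_le_sum
  intro z hz
  rw [mem_range] at hz
  exact choose_add_two_le a z (by omega)

lemma junk_bound (b d m M : ℕ) (h1 : 5*(m+1)+d ≤ b) (h2 : M * m * m * 2^d + m ≤ b + d + 1) :
    M * ∑ z ∈ Finset.range m, (b+d).choose z ≤ b.choose m := by
  rcases Nat.eq_zero_or_pos m with rfl | hm
  · simp
  set n := b + d with hn
  have hS : ∑ z ∈ Finset.range m, n.choose z ≤ m * n.choose (m-1) := by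
    calc ∑ z ∈ Finset.range m, n.choose z ≤ ∑ _z ∈ Finset.range m, n.choose (m-1) := by
          apply Finset.sum_le_sum
          intro z hz
          rw [mem_range] at hz
          exact choose_mono_right n (by omega) (by omega)
      _ = m * n.choose (m-1) := by rw [Finset.sum_const, card_range, smul_eq_mul]
  have hid : n.choose m * m = n.choose (m-1) * (n - (m-1)) := by
    have := Nat.choose_succ_right_eq n (m-1)
    rw [show m - 1 + 1 = m by omega] at this
    exact this
  have hpow : n.choose m ≤ 2^d * b.choose m := by
    exact choose_add_le_pow_mul d b m (by omega)
  -- multiply through by (n - (m-1)) and cancel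
  have hpos : 0 < n - (m-1) := by omega
  refine Nat.le_of_mul_le_mul_right ?_ hpos
  calc M * (∑ z ∈ Finset.range m, n.choose z) * (n - (m-1))
      ≤ M * (m * n.choose (m-1)) * (n - (m-1)) := by
        apply Nat.mul_le_mul_right
        exact Nat.mul_le_mul_left _ hS
    _ = M * m * (n.choose (m-1) * (n - (m-1))) := by ring
    _ = M * m * (n.choose m * m) := by rw [← hid]
    _ = (M * m * m) * n.choose m := by ring
    _ ≤ (M * m * m) * (2^d * b.choose m) := Nat.mul_le_mul_left _ hpow
    _ = (M * m * m * 2^d) * b.choose m := by ring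
    _ ≤ (n - (m-1)) * b.choose m := by
        apply Nat.mul_le_mul_right
        omega
    _ = b.choose m * (n - (m-1)) := by ring




lemma card_X_lower (n k t : ℕ) (hn : t + 2 ≤ n) :
    (t+2).choose t * ∑ z ∈ Finset.range (k - t), (n - (t+2)).choose z
      ≤ (Xset n k t (Finset.Icc 1 (t+2))).card := by
  classical
  set B2 := Finset.Icc 1 (t+2) with hB2
  have hB2n : B2 ⊆ Finset.Icc 1 n := Finset.Icc_subset_Icc le_rfl hn
  have hB2card : B2.card = t + 2 := card_Icc_one _
  set R := Finset.Icc 1 n \ B2 with hR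
  have hRcard : R.card = n - (t+2) := by
    rw [hR, card_sdiff_of_subset hB2n, card_Icc_one, hB2card]
  set P := B2.powersetCard t ×ˢ (R.powerset.filter fun Z => Z.card + (t+1) ≤ k) with hP
  have hcardP : P.card = (t+2).choose t * ∑ z ∈ Finset.range (k - t), (n - (t+2)).choose z := by
    rw [hP, card_product, card_powersetCard, hB2card,
      card_powerset_filter_card_add_le, hRcard]
    have : k + 1 - (t+1) = k - t := by omega
    rw [this]
  rw [← hcardP]
  apply Finset.card_le_card_of_injOn (fun p => p.1 ∪ p.2)
  · rintro ⟨S, Z⟩ hSZ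
    show S ∪ Z ∈ Xset n k t (Finset.Icc 1 (t+2))
    simp only [Finset.mem_coe, hP, mem_product, Finset.mem_powersetCard, mem_filter, mem_powerset] at hSZ
    obtain ⟨⟨hSB2, hScard⟩, hZR, hZcard⟩ := hSZ
    have hZB2 : ∀ x ∈ Z, x ∉ B2 := by
      intro x hx hxB2
      have := hZR hx
      rw [hR, mem_sdiff] at this
      exact this.2 hxB2
    rw [Xset, mem_filter, mem_powerset]
    refine ⟨?_, ?_, ?_⟩
    · apply union_subset (hSB2.trans hB2n)
      intro x hx; have := hZR hx; rw [hR, mem_sdiff] at this; exact this.1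
    · have : S ⊆ (S ∪ Z) ∩ B2 := subset_inter subset_union_left hSB2
      calc t = S.card := hScard.symm
        _ ≤ _ := card_le_card this
    · have h1 : (S ∪ Z).card ≤ S.card + Z.card := card_union_le _ _
      omega
  · rintro ⟨S, Z⟩ hSZ ⟨S', Z'⟩ hSZ' heq
    simp only [Set.mem_setOf_eq, Finset.coe_mem, hP, mem_coe, mem_product,
      Finset.mem_powersetCard, mem_filter, mem_powerset] at hSZ hSZ' heq
    obtain ⟨⟨hSB2, hScard⟩, hZR, hZcard⟩ := hSZ
    obtain ⟨⟨hSB2', hScard'⟩, hZR', hZcard'⟩ := hSZ'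
    have hZB2 : Z ∩ B2 = ∅ := by
      rw [eq_empty_iff_forall_notMem]
      intro x hx; rw [mem_inter] at hx
      have := hZR hx.1; rw [hR, mem_sdiff] at this; exact this.2 hx.2
    have hZB2' : Z' ∩ B2 = ∅ := by
      rw [eq_empty_iff_forall_notMem]
      intro x hx; rw [mem_inter] at hx
      have := hZR' hx.1; rw [hR, mem_sdiff] at this; exact this.2 hx.2
    have hS : (S ∪ Z) ∩ B2 = S := by
      rw [union_inter_distrib_right, hZB2, union_empty, inter_eq_left.mpr hSB2]
    have hS' : (S' ∪ Z') ∩ B2 = S' := by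
      rw [union_inter_distrib_right, hZB2', union_empty, inter_eq_left.mpr hSB2']
    have e1 : S = S' := by rw [← hS, ← hS', heq]
    have e2 : Z = Z' := by
      have hZ : (S ∪ Z) \ B2 = Z := by
        rw [union_sdiff_distrib, sdiff_eq_empty_iff_subset.mpr hSB2, empty_union]
        exact Finset.sdiff_eq_self_iff_disjoint.mpr
          (Finset.disjoint_iff_inter_eq_empty.mpr hZB2)
      have hZ' : (S' ∪ Z') \ B2 = Z' := by
        rw [union_sdiff_distrib, sdiff_eq_empty_iff_subset.mpr hSB2', empty_union]
        exact Finset.sdiff_eq_self_iff_disjoint.mpr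
          (Finset.disjoint_iff_inter_eq_empty.mpr hZB2')
      rw [← hZ, ← hZ', heq]
    exact Prod.ext e1 e2

lemma three_le_choose (t : ℕ) (ht : 1 ≤ t) : 3 ≤ (t+2).choose t := by
  have h1 : (t+2).choose t = (t+2).choose 2 := by
    have := Nat.choose_symm (show 2 ≤ t + 2 by omega)
    rw [show t + 2 - 2 = t by omega] at this
    exact this
  rw [h1]
  calc 3 = Nat.choose 3 2 := by decide
    _ ≤ (t+2).choose 2 := Nat.choose_le_choose 2 (by omega)

lemma mem_At_iff {n k t : ℕ} {A : Finset ℕ} :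
    A ∈ At n k t ↔ A ⊆ Finset.Icc 1 n ∧ A.card = k ∧ t + 1 ≤ (A ∩ Finset.Icc 1 (t+2)).card := by
  rw [At, mem_filter, Finset.mem_powersetCard]
  tauto

lemma Xset_subset_interFam_At (n k t : ℕ) (hk : t+1 ≤ k) (hn : 3*k + t + 2 ≤ n) :
    Xset n k t (Finset.Icc 1 (t+2)) ⊆ interFam (At n k t) := by
  classical
  intro I hI
  rw [Xset, mem_filter, mem_powerset] at hI
  obtain ⟨hIsub, htr, hsz⟩ := hI
  set B2 := Finset.Icc 1 (t+2) with hB2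
  have hB2n : B2 ⊆ Finset.Icc 1 n := Finset.Icc_subset_Icc le_rfl (by omega)
  have hB2card : B2.card = t + 2 := card_Icc_one _
  set R := Finset.Icc 1 n \ (B2 ∪ I) with hRdef
  have hRcard : 2*k ≤ R.card := by
    have h1 : (B2 ∪ I) ⊆ Finset.Icc 1 n := union_subset hB2n hIsub
    have h2 : R.card = n - (B2 ∪ I).card := by rw [hRdef, card_sdiff_of_subset h1, card_Icc_one]
    have h3 : (B2 ∪ I).card ≤ B2.card + I.card := card_union_le _ _
    omega
  have hRB2 : ∀ x ∈ R, x ∉ B2 := by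
    intro x hx hxB
    rw [hRdef, mem_sdiff, mem_union] at hx; exact hx.2 (Or.inl hxB)
  have hRI : ∀ x ∈ R, x ∉ I := by
    intro x hx hxB
    rw [hRdef, mem_sdiff, mem_union] at hx; exact hx.2 (Or.inr hxB)
  have hRicc : R ⊆ Finset.Icc 1 n := by rw [hRdef]; exact sdiff_subset
  by_cases hP : t + 1 ≤ (I ∩ B2).card
  · -- large trace: no extra trace element needed
    set p := k - I.card with hp
    have hp1 : 1 ≤ p := by omega
    obtain ⟨XA, hXAR, hXAcard⟩ := Finset.exists_subset_card_eq (show p ≤ R.card by omega)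
    have h4 : p ≤ (R \ XA).card := by
      rw [card_sdiff_of_subset hXAR]; omega
    obtain ⟨XB, hXBR', hXBcard⟩ := Finset.exists_subset_card_eq h4
    have hXBR : XB ⊆ R := hXBR'.trans sdiff_subset
    have hdisjAB : Disjoint XA XB := by
      rw [Finset.disjoint_right]
      intro x hx
      have := hXBR' hx; rw [mem_sdiff] at this; exact this.2
    have hXAI : Disjoint I XA := by
      rw [Finset.disjoint_right]; intro x hx; exact hRI x (hXAR hx)
    have hXBI : Disjoint I XB := by
      rw [Finset.disjoint_right]; intro x hx; exact hRI x (hXBR hx)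
    set A := I ∪ XA with hA
    set B := I ∪ XB with hBdef
    have hABeq : A ∩ B = I := by
      apply subset_antisymm
      · intro x hx
        rw [hA, hBdef, mem_inter, mem_union, mem_union] at hx
        rcases hx.1 with h | h
        · exact h
        · rcases hx.2 with h' | h'
          · exact h'
          · exact absurd h' (Finset.disjoint_left.mp hdisjAB h)
      · exact subset_inter subset_union_left subset_union_left
    have hAmem : A ∈ At n k t := by
      rw [mem_At_iff]
      refine ⟨union_subset hIsub (hXAR.trans hRicc), ?_, ?_⟩
      · rw [card_union_of_disjoint hXAI]; omega
      · calc t + 1 ≤ (I ∩ B2).card := hP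
          _ ≤ (A ∩ B2).card := card_le_card (inter_subset_inter subset_union_left le_rfl)
    have hBmem : B ∈ At n k t := by
      rw [mem_At_iff]
      refine ⟨union_subset hIsub (hXBR.trans hRicc), ?_, ?_⟩
      · rw [card_union_of_disjoint hXBI]; omega
      · calc t + 1 ≤ (I ∩ B2).card := hP
          _ ≤ (B ∩ B2).card := card_le_card (inter_subset_inter subset_union_left le_rfl)
    have hne : A ≠ B := by
      obtain ⟨a, ha⟩ := Finset.card_pos.mp (show 0 < XA.card by omega)
      intro hcontra
      have haA : a ∈ A := by rw [hA, mem_union]; exact Or.inr ha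
      have haB : a ∈ B := hcontra ▸ haA
      rw [hBdef, mem_union] at haB
      rcases haB with h | h
      · exact (Finset.disjoint_right.mp hXAI ha) h
      · exact (Finset.disjoint_left.mp hdisjAB ha) h
    exact mem_interFam.mpr ⟨A, hAmem, B, hBmem, hne, hABeq⟩
  · -- trace exactly t
    have htr' : (I ∩ B2).card = t := by omega
    have hB2I2 : (B2 \ I).card = 2 := by
      have h1 := Finset.card_sdiff_add_card_inter B2 I
      rw [inter_comm] at h1
      omega
    obtain ⟨a, b, hab, hB2Iab⟩ := Finset.card_eq_two.mp hB2I2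
    have haB2 : a ∈ B2 ∧ a ∉ I := by
      have : a ∈ B2 \ I := by rw [hB2Iab]; simp
      rw [mem_sdiff] at this; exact this
    have hbB2 : b ∈ B2 ∧ b ∉ I := by
      have : b ∈ B2 \ I := by rw [hB2Iab]; simp
      rw [mem_sdiff] at this; exact this
    set p := k - I.card - 1 with hp
    obtain ⟨XA, hXAR, hXAcard⟩ := Finset.exists_subset_card_eq (show p ≤ R.card by omega)
    have h4 : p ≤ (R \ XA).card := by rw [card_sdiff_of_subset hXAR]; omega
    obtain ⟨XB, hXBR', hXBcard⟩ := Finset.exists_subset_card_eq h4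
    have hXBR : XB ⊆ R := hXBR'.trans sdiff_subset
    have hdisjAB : Disjoint XA XB := by
      rw [Finset.disjoint_right]
      intro x hx
      have := hXBR' hx; rw [mem_sdiff] at this; exact this.2
    have hXAI : Disjoint I XA := by
      rw [Finset.disjoint_right]; intro x hx; exact hRI x (hXAR hx)
    have hXBI : Disjoint I XB := by
      rw [Finset.disjoint_right]; intro x hx; exact hRI x (hXBR hx)
    have haXA : a ∉ XA := fun h => hRB2 a (hXAR h) haB2.1
    have haXB : a ∉ XB := fun h => hRB2 a (hXBR h) haB2.1
    have hbXA : b ∉ XA := fun h => hRB2 b (hXAR h) hbB2.1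
    have hbXB : b ∉ XB := fun h => hRB2 b (hXBR h) hbB2.1
    set A := insert a (I ∪ XA) with hA
    set B := insert b (I ∪ XB) with hBdef
    have hABeq : A ∩ B = I := by
      apply subset_antisymm
      · intro x hx
        rw [hA, hBdef, mem_inter, mem_insert, mem_insert, mem_union, mem_union] at hx
        obtain ⟨hx1, hx2⟩ := hx
        rcases hx1 with rfl | hx1
        · rcases hx2 with rfl | hx2
          · exact absurd rfl hab
          · rcases hx2 with h | h
            · exact absurd h haB2.2
            · exact absurd h haXB
        · rcases hx1 with h | h
          · exact h
          · rcases hx2 with rfl | hx2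
            · exact absurd h hbXA
            · rcases hx2 with h' | h'
              · exact h'
              · exact absurd h' (Finset.disjoint_left.mp hdisjAB h)
      · intro x hx
        rw [hA, hBdef, mem_inter, mem_insert, mem_insert, mem_union, mem_union]
        exact ⟨Or.inr (Or.inl hx), Or.inr (Or.inl hx)⟩
    have hcardA : A.card = k := by
      rw [hA, card_insert_of_notMem, card_union_of_disjoint hXAI]
      · omega
      · rw [mem_union]; rintro (h | h); exacts [haB2.2 h, haXA h]
    have hcardB : B.card = k := by
      rw [hBdef, card_insert_of_notMem, card_union_of_disjoint hXBI]
      · omega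
      · rw [mem_union]; rintro (h | h); exacts [hbB2.2 h, hbXB h]
    have hAmem : A ∈ At n k t := by
      rw [mem_At_iff]
      refine ⟨?_, hcardA, ?_⟩
      · rw [hA]
        apply insert_subset (hB2n haB2.1)
        exact union_subset hIsub (hXAR.trans hRicc)
      · have hsub : insert a (I ∩ B2) ⊆ A ∩ B2 := by
          apply insert_subset
          · rw [mem_inter]; exact ⟨by rw [hA]; exact mem_insert_self a _, haB2.1⟩
          · apply inter_subset_inter _ le_rfl
            rw [hA]; exact subset_union_left.trans (subset_insert _ _)
        have hcardins : (insert a (I ∩ B2)).card = t + 1 := by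
          rw [card_insert_of_notMem]
          · rw [htr']
          · rw [mem_inter]; rintro ⟨h, -⟩; exact haB2.2 h
        calc t + 1 = (insert a (I ∩ B2)).card := hcardins.symm
          _ ≤ (A ∩ B2).card := card_le_card hsub
    have hBmem : B ∈ At n k t := by
      rw [mem_At_iff]
      refine ⟨?_, hcardB, ?_⟩
      · rw [hBdef]
        apply insert_subset (hB2n hbB2.1)
        exact union_subset hIsub (hXBR.trans hRicc)
      · have hsub : insert b (I ∩ B2) ⊆ B ∩ B2 := by
          apply insert_subset
          · rw [mem_inter]; exact ⟨by rw [hBdef]; exact mem_insert_self b _, hbB2.1⟩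
          · apply inter_subset_inter _ le_rfl
            rw [hBdef]; exact subset_union_left.trans (subset_insert _ _)
        have hcardins : (insert b (I ∩ B2)).card = t + 1 := by
          rw [card_insert_of_notMem]
          · rw [htr']
          · rw [mem_inter]; rintro ⟨h, -⟩; exact hbB2.2 h
        calc t + 1 = (insert b (I ∩ B2)).card := hcardins.symm
          _ ≤ (B ∩ B2).card := card_le_card hsub
    have hne : A ≠ B := by
      intro hcontra
      have haA : a ∈ A := by rw [hA]; exact mem_insert_self a _
      have haB : a ∈ B := hcontra ▸ haA
      rw [hBdef, mem_insert, mem_union] at haB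
      rcases haB with rfl | h | h
      · exact hab rfl
      · exact haB2.2 h
      · exact haXB h
    exact mem_interFam.mpr ⟨A, hAmem, B, hBmem, hne, hABeq⟩

lemma exists_saturated (n k t : ℕ) (F : Finset (Finset ℕ))
    (hF : F ⊆ (Finset.Icc 1 n).powersetCard k) (hFint : tIntersecting t F) :
    ∃ S, F ⊆ S ∧ S ⊆ (Finset.Icc 1 n).powersetCard k ∧ tIntersecting t S ∧ saturated n k t S := by
  classical
  set C := ((Finset.Icc 1 n).powersetCard k).powerset.filter
    (fun G => F ⊆ G ∧ tIntersecting t G) with hC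
  have hFC : F ∈ C := by
    rw [hC, mem_filter, mem_powerset]; exact ⟨hF, subset_rfl, hFint⟩
  obtain ⟨S, hSC, hmax⟩ := Finset.exists_max_image C Finset.card ⟨F, hFC⟩
  rw [hC, mem_filter, mem_powerset] at hSC
  obtain ⟨hSsub, hFS, hSint⟩ := hSC
  refine ⟨S, hFS, hSsub, hSint, ?_⟩
  intro G hG hGS hint
  have hmem : insert G S ∈ C := by
    rw [hC, mem_filter, mem_powerset]
    exact ⟨insert_subset hG hSsub, hFS.trans (subset_insert _ _), hint⟩
  have := hmax _ hmem
  rw [card_insert_of_notMem hGS] at this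
  omega

lemma exists_minimal_trans {t : ℕ} {S : Finset (Finset ℕ)} {T : Finset ℕ}
    (hT : TransOf t S T) :
    ∃ T' ⊆ T, TransOf t S T' ∧ ∀ T'' ⊆ T', TransOf t S T'' → T'' = T' := by
  classical
  set C := T.powerset.filter (fun T' => TransOf t S T') with hC
  have hne : C.Nonempty := ⟨T, by rw [hC, mem_filter, mem_powerset]; exact ⟨subset_rfl, hT⟩⟩
  obtain ⟨T', hT'C, hmin⟩ := Finset.exists_min_image C Finset.card hne
  rw [hC, mem_filter, mem_powerset] at hT'C
  refine ⟨T', hT'C.1, hT'C.2, ?_⟩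
  intro T'' hsub htr
  have hmem : T'' ∈ C := by
    rw [hC, mem_filter, mem_powerset]; exact ⟨hsub.trans hT'C.1, htr⟩
  have h1 := hmin _ hmem
  exact eq_of_subset_of_card_le hsub h1

lemma tree_lemma (t k : ℕ) (U : Finset ℕ) (S : Finset (Finset ℕ)) (htk : t ≤ k)
    (hS : ∀ A ∈ S, A ⊆ U ∧ A.card = k) :
    ∀ (j : ℕ) (P : Finset ℕ), P ⊆ U →
      ∃ C : Finset (Finset ℕ), C.card ≤ (k.choose t)^j ∧ (∀ c ∈ C, c ⊆ U) ∧
        ∀ T, P ⊆ T → T ⊆ U → TransOf t S T → T.card ≤ P.card + j →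
          ∃ c ∈ C, c ⊆ T ∧ TransOf t S c := by
  classical
  intro j
  induction j with
  | zero =>
    intro P hPU
    by_cases hTr : TransOf t S P
    · refine ⟨{P}, by simp, by simp [hPU], ?_⟩
      intro T hPT hTU hTtr hTcard
      exact ⟨P, mem_singleton_self P, hPT, hTr⟩
    · refine ⟨∅, by simp, by simp, ?_⟩
      intro T hPT hTU hTtr hTcard
      have : T = P := (eq_of_subset_of_card_le hPT (by omega)).symm
      exact absurd (this ▸ hTtr) hTr
  | succ j ih =>
    intro P hPU
    by_cases hTr : TransOf t S P
    · refine ⟨{P}, ?_, by simp [hPU], ?_⟩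
      · have : 0 < (k.choose t)^(j+1) := Nat.pow_pos (Nat.choose_pos htk)
        rw [card_singleton]; exact this
      · intro T hPT hTU hTtr hTcard
        exact ⟨P, mem_singleton_self P, hPT, hTr⟩
    · rw [TransOf] at hTr
      push_neg at hTr
      obtain ⟨A, hAS, hPA⟩ := hTr
      obtain ⟨hAU, hAcard⟩ := hS A hAS
      set f : Finset ℕ → Finset (Finset ℕ) := fun Q =>
        if h : (P ∪ Q) ⊆ U then Classical.choose (ih (P ∪ Q) h) else ∅ with hf
      refine ⟨(A.powersetCard t).biUnion f, ?_, ?_, ?_⟩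
      · calc ((A.powersetCard t).biUnion f).card ≤ ∑ Q ∈ A.powersetCard t, (f Q).card :=
              card_biUnion_le
          _ ≤ ∑ _Q ∈ A.powersetCard t, (k.choose t)^j := by
              apply Finset.sum_le_sum
              intro Q hQ
              simp only [hf]
              split
              · next h => exact (Classical.choose_spec (ih (P ∪ Q) h)).1
              · simp
          _ = (k.choose t)^(j+1) := by
              rw [Finset.sum_const, card_powersetCard, hAcard, smul_eq_mul, pow_succ]
              ring
      · intro c hc
        rw [mem_biUnion] at hc
        obtain ⟨Q, hQ, hcf⟩ := hc
        simp only [hf] at hcf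
        split at hcf
        · next h => exact (Classical.choose_spec (ih (P ∪ Q) h)).2.1 c hcf
        · simp at hcf
      · intro T hPT hTU hTtr hTcard
        have hTA : t ≤ (T ∩ A).card := hTtr A hAS
        obtain ⟨Q, hQsub, hQcard⟩ := Finset.exists_subset_card_eq hTA
        have hQA : Q ⊆ A := hQsub.trans inter_subset_right
        have hQT : Q ⊆ T := hQsub.trans inter_subset_left
        have hQP : ¬ Q ⊆ P := by
          intro hcon
          have : Q ⊆ P ∩ A := subset_inter hcon hQA
          have := card_le_card this
          omega
        obtain ⟨q, hqQ, hqP⟩ := not_subset.mp hQP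
        have hPQU : (P ∪ Q) ⊆ U := union_subset hPU (hQA.trans hAU)
        have hcard2 : P.card + 1 ≤ (P ∪ Q).card := by
          have h1 : insert q P ⊆ P ∪ Q :=
            insert_subset (mem_union_right _ hqQ) subset_union_left
          have h2 := card_le_card h1
          rw [card_insert_of_notMem hqP] at h2
          omega
        obtain ⟨-, -, hcover⟩ := Classical.choose_spec (ih (P ∪ Q) hPQU)
        obtain ⟨c, hcC, hcT, hctr⟩ :=
          hcover T (union_subset hPT hQT) hTU hTtr (by omega)
        refine ⟨c, ?_, hcT, hctr⟩
        rw [mem_biUnion]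
        refine ⟨Q, by rw [Finset.mem_powersetCard]; exact ⟨hQA, hQcard⟩, ?_⟩
        simp only [hf]
        rw [dif_pos hPQU]
        exact hcC

lemma exists_W (n k t : ℕ) (S : Finset (Finset ℕ)) (htk : t ≤ k)
    (hS : ∀ A ∈ S, A ⊆ Finset.Icc 1 n ∧ A.card = k) :
    ∃ W ⊆ Finset.Icc 1 n, W.card ≤ k * (k.choose t)^k ∧
      ∀ T, T ⊆ Finset.Icc 1 n → TransOf t S T →
        (∀ T'' ⊆ T, TransOf t S T'' → T'' = T) → T.card ≤ k → T ⊆ W := by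
  classical
  obtain ⟨C, hCcard, hCU, hcover⟩ := tree_lemma t k (Finset.Icc 1 n) S htk hS k ∅ (empty_subset _)
  set W := (C.filter (fun c => c.card ≤ k)).biUnion id with hW
  refine ⟨W, ?_, ?_, ?_⟩
  · rw [hW]
    apply biUnion_subset.mpr
    intro c hc
    exact hCU c (mem_filter.mp hc).1
  · calc W.card ≤ ∑ c ∈ C.filter (fun c => c.card ≤ k), (id c).card := card_biUnion_le
      _ ≤ ∑ _c ∈ C.filter (fun c => c.card ≤ k), k := by
          apply Finset.sum_le_sum; intro c hc; exact (mem_filter.mp hc).2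
      _ = (C.filter (fun c => c.card ≤ k)).card * k := by
          rw [Finset.sum_const, smul_eq_mul]
      _ ≤ (k.choose t)^k * k := by
          apply Nat.mul_le_mul_right
          exact le_trans (card_le_card (filter_subset _ _)) hCcard
      _ = k * (k.choose t)^k := by ring
  · intro T hTU hTtr hTmin hTk
    obtain ⟨c, hcC, hcT, hctr⟩ := hcover T (empty_subset _) hTU hTtr (by simpa using hTk)
    have hceq : c = T := hTmin c hcT hctr
    subst hceq
    rw [hW]
    apply subset_biUnion_of_mem id
    rw [mem_filter]
    exact ⟨hcC, hTk⟩

set_option maxHeartbeats 2000000 in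
lemma dichotomy (n k t : ℕ) (S : Finset (Finset ℕ)) (ht : 1 ≤ t) (hk : t+1 ≤ k)
    (hn : 2*k + 2*t + 2 ≤ n)
    (hSsub : S ⊆ (Finset.Icc 1 n).powersetCard k)
    (hSint : tIntersecting t S) (hsat : saturated n k t S) :
    (∃ S0 ⊆ Finset.Icc 1 n, S0.card = t ∧ ∀ A ∈ S,
        S0 ⊆ A ∨ (∀ T ⊆ A, TransOf t S T → t + 2 ≤ T.card))
    ∨ (∃ Y ⊆ Finset.Icc 1 n, Y.card = t + 2 ∧ ∀ A ∈ S, t + 1 ≤ (A ∩ Y).card) := by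
  classical
  have hmem : ∀ A ∈ S, A ⊆ Finset.Icc 1 n ∧ A.card = k := by
    intro A hA
    have := hSsub hA
    rwa [Finset.mem_powersetCard] at this
  set M := (Finset.Icc 1 n).powerset.filter
    (fun T => TransOf t S T ∧ T.card ≤ t+1) with hM
  have hMmem : ∀ T, T ∈ M ↔ T ⊆ Finset.Icc 1 n ∧ TransOf t S T ∧ T.card ≤ t + 1 := by
    intro T
    rw [hM, mem_filter, mem_powerset]
  have hIccT : t ≤ (Finset.Icc 1 n).card := by rw [card_Icc_one]; omega
  by_cases hsmall : ∃ T ∈ M, T.card ≤ t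
  · -- a transversal of size ≤ t exists: star case
    obtain ⟨T, hTM, hTc⟩ := hsmall
    rw [hMmem] at hTM
    obtain ⟨hTicc, hTtr, -⟩ := hTM
    rcases S.eq_empty_or_nonempty with rfl | ⟨A0, hA0⟩
    · left
      obtain ⟨S0, hS0, hS0c⟩ := Finset.exists_subset_card_eq hIccT
      exact ⟨S0, hS0, hS0c, fun A hA => absurd hA (notMem_empty A)⟩
    · have hTt : T.card = t := by
        have := hTtr A0 hA0
        have h2 : (T ∩ A0).card ≤ T.card := card_le_card inter_subset_left
        omega
      left
      refine ⟨T, hTicc, hTt, ?_⟩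
      intro A hA
      left
      have h1 := hTtr A hA
      have h2 : T ∩ A ⊆ T := inter_subset_left
      have h3 : T ∩ A = T := eq_of_subset_of_card_le h2 (by omega)
      intro x hx
      have : x ∈ T ∩ A := h3.symm ▸ hx
      exact (mem_inter.mp this).2
  · push_neg at hsmall
    have hMcard : ∀ T ∈ M, T.card = t + 1 := by
      intro T hT
      have h1 := hsmall T hT
      rw [hMmem] at hT
      omega
    by_cases hCOM : ∃ S0 : Finset ℕ, S0.card = t ∧ ∀ T ∈ M, S0 ⊆ T
    · -- common t-set case
      left
      rcases M.eq_empty_or_nonempty with hMe | ⟨T1, hT1⟩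
      · obtain ⟨S0, hS0, hS0c⟩ := Finset.exists_subset_card_eq hIccT
        refine ⟨S0, hS0, hS0c, ?_⟩
        intro A hA
        right
        intro T hTA hTtr
        by_contra hcon
        have : T ∈ M := by
          rw [hMmem]
          exact ⟨hTA.trans (hmem A hA).1, hTtr, by omega⟩
        rw [hMe] at this
        exact notMem_empty T this
      · obtain ⟨S0, hS0c, hS0⟩ := hCOM
        have hS0icc : S0 ⊆ Finset.Icc 1 n := by
          have h1 := hS0 T1 hT1
          rw [hMmem] at hT1
          exact h1.trans hT1.1
        refine ⟨S0, hS0icc, hS0c, ?_⟩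
        intro A hA
        by_cases hsm : ∃ T ⊆ A, TransOf t S T ∧ T.card ≤ t + 1
        · obtain ⟨T, hTA, hTtr, hTc⟩ := hsm
          left
          have hTM : T ∈ M := by
            rw [hMmem]
            exact ⟨hTA.trans (hmem A hA).1, hTtr, hTc⟩
          exact (hS0 T hTM).trans hTA
        · push_neg at hsm
          right
          intro T hTA hTtr
          have := hsm T hTA hTtr
          omega
    · -- no common t-set: find Y
      right
      push_neg at hCOM
      -- star lemma
      have hstar : ∀ T ∈ M, ∀ A : Finset ℕ, A ⊆ Finset.Icc 1 n → A.card = k → T ⊆ A → A ∈ S := by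
        intro T hTM A hAicc hAcard hTA
        rw [hMmem] at hTM
        by_contra hAS
        apply hsat A (by rw [Finset.mem_powersetCard]; exact ⟨hAicc, hAcard⟩) hAS
        intro X hX Y hY
        rw [mem_insert] at hX hY
        rcases hX with rfl | hX
        · rcases hY with rfl | hY
          · rw [inter_self, hAcard]; omega
          · have h1 := hTM.2.1 Y hY
            have h2 : T ∩ Y ⊆ X ∩ Y := inter_subset_inter hTA le_rfl
            exact h1.trans (card_le_card h2)
        · rcases hY with rfl | hY
          · have h1 := hTM.2.1 X hX
            have h2 : T ∩ X ⊆ Y ∩ X := inter_subset_inter hTA le_rfl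
            rw [inter_comm Y X] at h2
            exact h1.trans (card_le_card h2)
          · exact hSint X hX Y hY
      -- M is nonempty
      rcases M.eq_empty_or_nonempty with hMe | ⟨T1, hT1⟩
      · exfalso
        obtain ⟨S0, hS0, hS0c⟩ := Finset.exists_subset_card_eq hIccT
        obtain ⟨T, hTM, -⟩ := hCOM S0 hS0c
        rw [hMe] at hTM
        exact notMem_empty T hTM
      -- pairwise t-intersecting
      have hpair : ∀ T ∈ M, ∀ T' ∈ M, t ≤ (T ∩ T').card := by
        intro T hTM T' hT'M
        have hTc := hMcard T hTM
        have hT'c := hMcard T' hT'M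
        rw [hMmem] at hTM hT'M
        set R := Finset.Icc 1 n \ (T ∪ T') with hR
        have hRc : 2*(k-t-1) ≤ R.card := by
          have h1 : (T ∪ T') ⊆ Finset.Icc 1 n := union_subset hTM.1 hT'M.1
          have h2 : R.card = n - (T ∪ T').card := by
            rw [hR, card_sdiff_of_subset h1, card_Icc_one]
          have h3 : (T ∪ T').card ≤ T.card + T'.card := card_union_le _ _
          omega
        obtain ⟨E, hER, hEc⟩ := Finset.exists_subset_card_eq
          (show k - t - 1 ≤ R.card by omega)
        have h4 : k - t - 1 ≤ (R \ E).card := by rw [card_sdiff_of_subset hER]; omega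
        obtain ⟨E', hE'R', hE'c⟩ := Finset.exists_subset_card_eq h4
        have hE'R : E' ⊆ R := hE'R'.trans sdiff_subset
        have hRmem : ∀ x ∈ R, x ∉ T ∧ x ∉ T' := by
          intro x hx
          rw [hR, mem_sdiff, mem_union] at hx
          tauto
        have hdisjTE : Disjoint T E := by
          rw [Finset.disjoint_right]; intro x hx; exact (hRmem x (hER hx)).1
        have hdisjT'E' : Disjoint T' E' := by
          rw [Finset.disjoint_right]; intro x hx; exact (hRmem x (hE'R hx)).2
        set A := T ∪ E with hA
        set B := T' ∪ E' with hB
        have hAS : A ∈ S := by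
          apply hstar T (by rw [hMmem]; exact hTM) A
          · exact union_subset hTM.1 (hER.trans (by rw [hR]; exact sdiff_subset))
          · rw [hA, card_union_of_disjoint hdisjTE]; omega
          · exact subset_union_left
        have hBS : B ∈ S := by
          apply hstar T' (by rw [hMmem]; exact hT'M) B
          · exact union_subset hT'M.1 (hE'R.trans (by rw [hR]; exact sdiff_subset))
          · rw [hB, card_union_of_disjoint hdisjT'E']; omega
          · exact subset_union_left
        have hABsub : A ∩ B ⊆ T ∩ T' := by
          intro x hx
          rw [hA, hB, mem_inter, mem_union, mem_union] at hx
          rw [mem_inter]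
          obtain ⟨h1, h2⟩ := hx
          rcases h1 with h1 | h1
          · rcases h2 with h2 | h2
            · exact ⟨h1, h2⟩
            · exact absurd h1 (hRmem x (hE'R h2)).1
          · rcases h2 with h2 | h2
            · exact absurd h2 (hRmem x (hER h1)).2
            · have := hE'R' h2
              rw [mem_sdiff] at this
              exact absurd h1 this.2
        exact (hSint A hAS B hBS).trans (card_le_card hABsub)
      -- a second distinct element of M
      have hT2ex : ∃ T2 ∈ M, T2 ≠ T1 := by
        by_contra hcon
        push_neg at hcon
        have hT1c := hMcard T1 hT1
        obtain ⟨S0, hS0T1, hS0c⟩ := Finset.exists_subset_card_eq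
          (show t ≤ T1.card by omega)
        obtain ⟨T, hTM, hnsub⟩ := hCOM S0 hS0c
        have := hcon T hTM
        subst this
        exact hnsub hS0T1
      obtain ⟨T2, hT2, hT2ne⟩ := hT2ex
      have hT1c := hMcard T1 hT1
      have hT2c := hMcard T2 hT2
      set S0 := T1 ∩ T2 with hS0def
      have hS0le : S0.card ≤ t := by
        by_contra hcon
        push_neg at hcon
        have h1 : S0 ⊆ T1 := inter_subset_left
        have h2 : S0 = T1 := eq_of_subset_of_card_le h1 (by omega)
        have h3 : T1 ⊆ T2 := by
          rw [← h2]; exact inter_subset_right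
        exact hT2ne (eq_of_subset_of_card_le h3 (by omega)).symm
      have hS0c : S0.card = t := le_antisymm hS0le (hpair T1 hT1 T2 hT2)
      obtain ⟨T3, hT3, hT3ns⟩ := hCOM S0 hS0c
      have hT3c := hMcard T3 hT3
      -- u and v
      have hT1sd : (T1 \ T2).card = 1 := by
        have h := Finset.card_sdiff_add_card_inter T1 T2
        rw [← hS0def] at h
        omega
      have hT2sd : (T2 \ T1).card = 1 := by
        have h := Finset.card_sdiff_add_card_inter T2 T1
        rw [inter_comm, ← hS0def] at h
        omega
      obtain ⟨u, hu⟩ := Finset.card_eq_one.mp hT1sd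
      obtain ⟨v, hv⟩ := Finset.card_eq_one.mp hT2sd
      have huT1 : u ∈ T1 ∧ u ∉ T2 := by
        have : u ∈ T1 \ T2 := by rw [hu]; exact mem_singleton_self u
        rw [mem_sdiff] at this; exact this
      have hvT2 : v ∈ T2 ∧ v ∉ T1 := by
        have : v ∈ T2 \ T1 := by rw [hv]; exact mem_singleton_self v
        rw [mem_sdiff] at this; exact this
      have hT1eq : T1 = S0 ∪ {u} := by
        rw [hS0def, ← hu]
        ext x
        simp only [mem_union, mem_inter, mem_sdiff]
        tauto
      have hT2eq : T2 = S0 ∪ {v} := by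
        rw [hS0def, inter_comm T1 T2, ← hv]
        ext x
        simp only [mem_union, mem_inter, mem_sdiff]
        tauto
      have huS0 : u ∉ S0 := by
        rw [hS0def, mem_inter]; rintro ⟨-, h⟩; exact huT1.2 h
      have hvS0 : v ∉ S0 := by
        rw [hS0def, mem_inter]; rintro ⟨h, -⟩; exact hvT2.2 h
      have huv : u ≠ v := by
        intro h; subst h; exact hvT2.2 huT1.1
      -- T3 structure
      have hT3T1 : (T3 ∩ T1).card = t := by
        have h1 := hpair T3 hT3 T1 hT1
        have h2 : (T3 ∩ T1).card ≤ t + 1 := hT3c ▸ card_le_card inter_subset_left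
        rcases Nat.lt_or_ge (T3 ∩ T1).card (t+1) with h | h
        · omega
        · exfalso
          have h3 : T3 ∩ T1 = T3 := eq_of_subset_of_card_le inter_subset_left (by omega)
          have h4 : T3 ⊆ T1 := by rw [← h3]; exact inter_subset_right
          have h5 : T3 = T1 := eq_of_subset_of_card_le h4 (by omega)
          exact hT3ns (h5 ▸ (hS0def ▸ inter_subset_left))
      have hT3T2 : (T3 ∩ T2).card = t := by
        have h1 := hpair T3 hT3 T2 hT2
        have h2 : (T3 ∩ T2).card ≤ t + 1 := hT3c ▸ card_le_card inter_subset_left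
        rcases Nat.lt_or_ge (T3 ∩ T2).card (t+1) with h | h
        · omega
        · exfalso
          have h3 : T3 ∩ T2 = T3 := eq_of_subset_of_card_le inter_subset_left (by omega)
          have h4 : T3 ⊆ T2 := by rw [← h3]; exact inter_subset_right
          have h5 : T3 = T2 := eq_of_subset_of_card_le h4 (by omega)
          exact hT3ns (h5 ▸ (hS0def ▸ inter_subset_right))
      have hT3S0 : (T3 ∩ S0).card ≤ t - 1 := by
        have h1 : T3 ∩ S0 ⊆ S0 := inter_subset_right
        have h2 : T3 ∩ S0 ≠ S0 := by
          intro h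
          apply hT3ns
          intro x hx
          have : x ∈ T3 ∩ S0 := h.symm ▸ hx
          exact (mem_inter.mp this).1
        have h4 : ¬ (S0.card ≤ (T3 ∩ S0).card) := fun hle => h2 (eq_of_subset_of_card_le h1 hle)
        omega
      have huT3 : u ∈ T3 ∧ (T3 ∩ S0).card = t - 1 := by
        have hsplit : T3 ∩ T1 = (T3 ∩ S0) ∪ (T3 ∩ {u}) := by
          rw [hT1eq, inter_union_distrib_left]
        have hdisj : Disjoint (T3 ∩ S0) (T3 ∩ {u}) := by
          rw [Finset.disjoint_right]
          intro x hx
          rw [mem_inter, mem_singleton] at hx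
          obtain ⟨-, rfl⟩ := hx
          rw [mem_inter]
          rintro ⟨-, h⟩
          exact huS0 h
        have hcard : (T3 ∩ T1).card = (T3 ∩ S0).card + (T3 ∩ {u}).card := by
          rw [hsplit, card_union_of_disjoint hdisj]
        have hle : (T3 ∩ {u}).card ≤ 1 := by
          have : T3 ∩ {u} ⊆ {u} := inter_subset_right
          have := card_le_card this
          simpa using this
        have h1 : (T3 ∩ {u}).card = 1 ∧ (T3 ∩ S0).card = t - 1 := by omega
        constructor
        · have h2 : T3 ∩ {u} = {u} :=
            eq_of_subset_of_card_le inter_subset_right (by simp [h1.1])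
          have : u ∈ T3 ∩ {u} := by rw [h2]; exact mem_singleton_self u
          exact (mem_inter.mp this).1
        · exact h1.2
      have hvT3 : v ∈ T3 := by
        have hsplit : T3 ∩ T2 = (T3 ∩ S0) ∪ (T3 ∩ {v}) := by
          rw [hT2eq, inter_union_distrib_left]
        have hdisj : Disjoint (T3 ∩ S0) (T3 ∩ {v}) := by
          rw [Finset.disjoint_right]
          intro x hx
          rw [mem_inter, mem_singleton] at hx
          obtain ⟨-, rfl⟩ := hx
          rw [mem_inter]
          rintro ⟨-, h⟩
          exact hvS0 h
        have hcard : (T3 ∩ T2).card = (T3 ∩ S0).card + (T3 ∩ {v}).card := by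
          rw [hsplit, card_union_of_disjoint hdisj]
        have hle : (T3 ∩ {v}).card ≤ 1 := by
          have : T3 ∩ {v} ⊆ {v} := inter_subset_right
          have := card_le_card this
          simpa using this
        have h1 : (T3 ∩ {v}).card = 1 := by omega
        have h2 : T3 ∩ {v} = {v} :=
          eq_of_subset_of_card_le inter_subset_right (by simp [h1])
        have : v ∈ T3 ∩ {v} := by rw [h2]; exact mem_singleton_self v
        exact (mem_inter.mp this).1
      -- s
      have hS0T3 : (S0 \ T3).card = 1 := by
        have h1 := Finset.card_sdiff_add_card_inter S0 T3
        rw [inter_comm] at h1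
        omega
      obtain ⟨s, hs⟩ := Finset.card_eq_one.mp hS0T3
      have hsS0 : s ∈ S0 ∧ s ∉ T3 := by
        have : s ∈ S0 \ T3 := by rw [hs]; exact mem_singleton_self s
        rw [mem_sdiff] at this; exact this
      -- Y
      set Y := insert v T1 with hY
      have hYc : Y.card = t + 2 := by
        rw [hY, card_insert_of_notMem hvT2.2]; omega
      have hYicc : Y ⊆ Finset.Icc 1 n := by
        rw [hY]
        apply insert_subset
        · rw [hMmem] at hT2; exact hT2.1 hvT2.1
        · rw [hMmem] at hT1; exact hT1.1
      have hT1Y : T1 = Y.erase v := by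
        rw [hY, Finset.erase_insert hvT2.2]
      have hT2Y : T2 = Y.erase u := by
        have h1 : Y = S0 ∪ {u, v} := by
          rw [hY, hT1eq]
          ext x
          simp only [mem_insert, mem_union, mem_singleton]
          tauto
        rw [hT2eq, h1]
        ext x
        simp only [Finset.mem_erase, mem_union, mem_singleton, mem_insert]
        constructor
        · rintro (h | rfl)
          · constructor
            · intro hx; subst hx; exact huS0 h
            · tauto
          · exact ⟨(Ne.symm huv), Or.inr (Or.inr rfl)⟩
        · rintro ⟨hne, h | h | h⟩
          · tauto
          · exact absurd h hne
          · tauto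
      have hT3Y : T3 = Y.erase s := by
        have h1 : Y = S0 ∪ {u, v} := by
          rw [hY, hT1eq]
          ext x
          simp only [mem_insert, mem_union, mem_singleton]
          tauto
        have hsub : (T3 ∩ S0) ∪ {u, v} ⊆ T3 := by
          apply union_subset inter_subset_left
          intro x hx
          rw [mem_insert, mem_singleton] at hx
          rcases hx with rfl | rfl
          exacts [huT3.1, hvT3]
        have hcardsub : ((T3 ∩ S0) ∪ {u, v}).card = t + 1 := by
          have hd : Disjoint (T3 ∩ S0) {u, v} := by
            rw [Finset.disjoint_right]
            intro x hx
            rw [mem_insert, mem_singleton] at hx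
            rw [mem_inter]
            rcases hx with rfl | rfl
            · rintro ⟨-, h⟩; exact huS0 h
            · rintro ⟨-, h⟩; exact hvS0 h
          rw [card_union_of_disjoint hd, huT3.2]
          have : ({u, v} : Finset ℕ).card = 2 := by
            rw [card_insert_of_notMem (by simpa using huv), card_singleton]
          omega
        have hT3eq : T3 = (T3 ∩ S0) ∪ {u, v} :=
          (eq_of_subset_of_card_le hsub (by omega)).symm
        have hT3S0eq : T3 ∩ S0 = S0.erase s := by
          have h2 : S0.erase s = S0 \ {s} := by rw [Finset.erase_eq]
          rw [h2, ← hs, Finset.sdiff_sdiff_self_left, inter_comm]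
        rw [hT3eq, hT3S0eq, h1]
        ext x
        simp only [Finset.mem_erase, mem_union, mem_insert, mem_singleton]
        constructor
        · rintro (⟨hne, hx⟩ | h)
          · exact ⟨hne, Or.inl hx⟩
          · rcases h with rfl | rfl
            · exact ⟨fun hc => hsS0.2 (hc ▸ huT3.1), Or.inr (Or.inl rfl)⟩
            · exact ⟨fun hc => hsS0.2 (hc ▸ hvT3), Or.inr (Or.inr rfl)⟩
        · rintro ⟨hne, h | h | h⟩
          · exact Or.inl ⟨hne, h⟩
          · exact Or.inr (Or.inl h)
          · exact Or.inr (Or.inr h)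
      -- final conclusion
      refine ⟨Y, hYicc, hYc, ?_⟩
      intro A hA
      by_contra hcon
      push_neg at hcon
      set P := A ∩ Y with hP
      have hPY : P ⊆ Y := inter_subset_right
      have htrans : ∀ T ∈ M, t ≤ (A ∩ T).card := by
        intro T hTM
        rw [hMmem] at hTM
        have := hTM.2.1 A hA
        rwa [inter_comm] at this
      have hPcard : P.card = t := by
        have h1 := htrans T1 hT1
        have h2 : A ∩ T1 ⊆ P := by
          rw [hP]
          apply inter_subset_inter le_rfl
          rw [hT1Y]
          exact erase_subset _ _
        have := card_le_card h2
        omega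
      have herase : ∀ c ∈ P, c = u ∨ c = v ∨ c = s → False := by
        intro c hcP hc
        have hTc : ∃ T ∈ M, T = Y.erase c := by
          rcases hc with rfl | rfl | rfl
          · exact ⟨T2, hT2, hT2Y⟩
          · exact ⟨T1, hT1, hT1Y⟩
          · exact ⟨T3, hT3, hT3Y⟩
        obtain ⟨T, hTM, hTeq⟩ := hTc
        have h1 := htrans T hTM
        have h2 : A ∩ T = P.erase c := by
          rw [hTeq, hP, Finset.erase_eq, Finset.erase_eq, inter_comm A (Y \ {c}),
            inter_comm A Y]
          ext x
          simp only [mem_inter, mem_sdiff, mem_singleton]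
          tauto
        rw [h2, card_erase_of_mem hcP, hPcard] at h1
        omega
      -- u, v, s all outside P, but Y \ P has only 2 elements
      have huvs : ({u, v, s} : Finset ℕ) ⊆ Y \ P := by
        intro x hx
        rw [mem_insert, mem_insert, mem_singleton] at hx
        have hxY : x ∈ Y := by
          rcases hx with rfl | rfl | rfl
          · rw [hY]; exact mem_insert_of_mem huT1.1
          · rw [hY]; exact mem_insert_self _ _
          · rw [hY]; exact mem_insert_of_mem (hT1eq ▸ mem_union_left _ hsS0.1)
        rw [mem_sdiff]
        refine ⟨hxY, fun hxP => ?_⟩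
        rcases hx with rfl | rfl | rfl
        · exact herase x hxP (Or.inl rfl)
        · exact herase x hxP (Or.inr (Or.inl rfl))
        · exact herase x hxP (Or.inr (Or.inr rfl))
      have hYPcard : (Y \ P).card = 2 := by
        rw [card_sdiff_of_subset hPY, hYc, hPcard]; omega
      have hsu : s ≠ u := fun h => huS0 (h ▸ hsS0.1)
      have hsv : s ≠ v := fun h => hvS0 (h ▸ hsS0.1)
      have h3c : ({u, v, s} : Finset ℕ).card = 3 := by
        rw [card_insert_of_notMem, card_insert_of_notMem, card_singleton]
        · simpa using (Ne.symm hsv)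
        · simp only [mem_insert, mem_singleton]
          rintro (h | h)
          exacts [huv h, hsu (h.symm) ]
      have := card_le_card huvs
      omega

lemma card_Xset_le_std (n k t : ℕ) (Y : Finset ℕ) (hYicc : Y ⊆ Finset.Icc 1 n)
    (hYc : Y.card = t + 2) (hn : t + 2 ≤ n) :
    (Xset n k t Y).card ≤ (Xset n k t (Finset.Icc 1 (t+2))).card := by
  classical
  set B := Finset.Icc 1 (t+2) with hB
  have hBicc : B ⊆ Finset.Icc 1 n := Finset.Icc_subset_Icc le_rfl hn
  have hBc : B.card = t + 2 := card_Icc_one _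
  have hcard : (Y \ B).card = (B \ Y).card := by
    have h1 := Finset.card_sdiff_add_card_inter Y B
    have h2 := Finset.card_sdiff_add_card_inter B Y
    rw [inter_comm] at h2
    omega
  set e := Finset.equivOfCardEq hcard with he
  set f : ℕ → ℕ := fun x =>
    if hx : x ∈ Y \ B then (e ⟨x, hx⟩ : ℕ)
    else if hx' : x ∈ B \ Y then (e.symm ⟨x, hx'⟩ : ℕ) else x with hf
  have hval1 : ∀ x (hx : x ∈ Y \ B), f x = (e ⟨x, hx⟩ : ℕ) := by
    intro x hx; simp only [hf]; rw [dif_pos hx]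
  have hval2 : ∀ x (hx' : x ∈ B \ Y), f x = (e.symm ⟨x, hx'⟩ : ℕ) := by
    intro x hx'
    have hnx : x ∉ Y \ B := fun hc => (mem_sdiff.mp hc).2 (mem_sdiff.mp hx').1
    simp only [hf]; rw [dif_neg hnx, dif_pos hx']
  have hval3 : ∀ x, x ∉ Y \ B → x ∉ B \ Y → f x = x := by
    intro x h1 h2; simp only [hf]; rw [dif_neg h1, dif_neg h2]
  have hmem1 : ∀ x (hx : x ∈ Y \ B), f x ∈ B \ Y := by
    intro x hx; rw [hval1 x hx]; exact coe_mem _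
  have hmem2 : ∀ x (hx' : x ∈ B \ Y), f x ∈ Y \ B := by
    intro x hx'; rw [hval2 x hx']; exact coe_mem _
  have hinv : ∀ x, f (f x) = x := by
    intro x
    by_cases h1 : x ∈ Y \ B
    · have h2 := hmem1 x h1
      have h4 := hval2 (f x) h2
      have h5 : (⟨f x, h2⟩ : {z // z ∈ B \ Y}) = e ⟨x, h1⟩ := Subtype.ext (hval1 x h1)
      rw [h4, h5, Equiv.symm_apply_apply]
    · by_cases h1' : x ∈ B \ Y
      · have h2 := hmem2 x h1'
        have h4 := hval1 (f x) h2
        have h5 : (⟨f x, h2⟩ : {z // z ∈ Y \ B}) = e.symm ⟨x, h1'⟩ := Subtype.ext (hval2 x h1')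
        rw [h4, h5, Equiv.apply_symm_apply]
      · rw [hval3 x h1 h1', hval3 x h1 h1']
  have hinj : Function.Injective f := Function.Involutive.injective hinv
  have hfB : ∀ x ∈ Y, f x ∈ B := by
    intro x hx
    by_cases h1 : x ∈ Y \ B
    · exact (mem_sdiff.mp (hmem1 x h1)).1
    · have hxB : x ∈ B := by
        by_contra hc
        exact h1 (mem_sdiff.mpr ⟨hx, hc⟩)
      have h2 : x ∉ B \ Y := fun hc => (mem_sdiff.mp hc).2 hx
      rw [hval3 x h1 h2]; exact hxB
  have hficc : ∀ x ∈ Finset.Icc 1 n, f x ∈ Finset.Icc 1 n := by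
    intro x hx
    by_cases h1 : x ∈ Y \ B
    · exact hBicc (mem_sdiff.mp (hmem1 x h1)).1
    · by_cases h2 : x ∈ B \ Y
      · exact hYicc (mem_sdiff.mp (hmem2 x h2)).1
      · rw [hval3 x h1 h2]; exact hx
  apply Finset.card_le_card_of_injOn (fun I => I.image f)
  · intro I hI
    rw [Finset.mem_coe, Xset, mem_filter, mem_powerset] at hI ⊢
    obtain ⟨hIicc, htr, hsz⟩ := hI
    refine ⟨?_, ?_, ?_⟩
    · intro y hy
      rw [Finset.mem_image] at hy
      obtain ⟨x, hx, rfl⟩ := hy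
      exact hficc x (hIicc hx)
    · have hsub : (I ∩ Y).image f ⊆ (I.image f) ∩ B := by
        intro y hy
        rw [Finset.mem_image] at hy
        obtain ⟨x, hx, rfl⟩ := hy
        rw [mem_inter] at hx
        rw [mem_inter]
        exact ⟨Finset.mem_image_of_mem f hx.1, hfB x hx.2⟩
      calc t ≤ (I ∩ Y).card := htr
        _ = ((I ∩ Y).image f).card := (Finset.card_image_of_injective _ hinj).symm
        _ ≤ _ := card_le_card hsub
    · rw [Finset.card_image_of_injective _ hinj]; exact hsz
  · intro I hI I' hI' heq
    have := Finset.image_injective hinj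
    exact this heq

lemma interFam_subset_Xset_Y (n k t : ℕ) (S : Finset (Finset ℕ)) (Y : Finset ℕ)
    (hSsub : S ⊆ (Finset.Icc 1 n).powersetCard k)
    (hYc : Y.card = t + 2)
    (htr : ∀ A ∈ S, t + 1 ≤ (A ∩ Y).card) :
    interFam S ⊆ Xset n k t Y := by
  intro I hI
  rw [mem_interFam] at hI
  obtain ⟨A, hA, B, hB, hne, rfl⟩ := hI
  have hAm := Finset.mem_powersetCard.mp (hSsub hA)
  have hBm := Finset.mem_powersetCard.mp (hSsub hB)
  rw [Xset, mem_filter, mem_powerset]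
  refine ⟨(inter_subset_left).trans hAm.1, ?_, card_inter_lt_of_ne hAm.2 hBm.2 hne⟩
  have key : (A ∩ Y) ∩ (B ∩ Y) = (A ∩ B) ∩ Y := by
    ext x; simp only [mem_inter]; tauto
  have h1 := Finset.card_inter_add_card_union (A ∩ Y) (B ∩ Y)
  have h2 : (A ∩ Y) ∪ (B ∩ Y) ⊆ Y := union_subset inter_subset_right inter_subset_right
  have h3 := card_le_card h2
  have h4 := htr A hA
  have h5 := htr B hB
  rw [key] at h1
  omega

lemma card_J1_eq (n k t : ℕ) (S0 : Finset ℕ) (hS0icc : S0 ⊆ Finset.Icc 1 n)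
    (hS0c : S0.card = t) :
    (((Finset.Icc 1 n).powerset).filter (fun I => S0 ⊆ I ∧ I.card + 1 ≤ k)).card
      = ∑ z ∈ Finset.range (k - t), (n - t).choose z := by
  classical
  have h1 : ((((Finset.Icc 1 n) \ S0).powerset).filter (fun Z => Z.card + (t+1) ≤ k)).card
      = ∑ z ∈ Finset.range (k - t), (n - t).choose z := by
    rw [card_powerset_filter_card_add_le, card_sdiff_of_subset hS0icc, card_Icc_one, hS0c]
    have : k + 1 - (t+1) = k - t := by omega
    rw [this]
  rw [← h1]
  apply Finset.card_bij' (fun I _ => I \ S0) (fun Z _ => S0 ∪ Z)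
  · intro I hI
    rw [mem_filter, mem_powerset] at hI
    obtain ⟨hIicc, hS0I, hsz⟩ := hI
    rw [mem_filter, mem_powerset]
    constructor
    · exact sdiff_subset_sdiff hIicc le_rfl
    · rw [card_sdiff_of_subset hS0I]
      have := card_le_card hS0I
      omega
  · intro Z hZ
    rw [mem_filter, mem_powerset] at hZ
    obtain ⟨hZicc, hsz⟩ := hZ
    have hdisj : Disjoint S0 Z := by
      rw [Finset.disjoint_right]
      intro x hx
      have := hZicc hx
      rw [mem_sdiff] at this
      exact this.2
    rw [mem_filter, mem_powerset]
    refine ⟨union_subset hS0icc (hZicc.trans sdiff_subset), subset_union_left, ?_⟩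
    rw [card_union_of_disjoint hdisj]
    omega
  · intro I hI
    rw [mem_filter, mem_powerset] at hI
    ext x
    simp only [mem_union, mem_sdiff]
    constructor
    · rintro (h | ⟨h, -⟩)
      · exact hI.2.1 h
      · exact h
    · intro h
      by_cases hx : x ∈ S0
      · exact Or.inl hx
      · exact Or.inr ⟨h, hx⟩
  · intro Z hZ
    rw [mem_filter, mem_powerset] at hZ
    have hdisj : ∀ x ∈ Z, x ∉ S0 := by
      intro x hx
      have := hZ.1 hx
      rw [mem_sdiff] at this
      exact this.2
    ext x
    simp only [mem_sdiff, mem_union]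
    constructor
    · rintro ⟨h | h, hns⟩
      · exact absurd h hns
      · exact h
    · intro h
      exact ⟨Or.inr h, hdisj x h⟩

lemma card_J2_le (n k t : ℕ) (W : Finset ℕ) (hWicc : W ⊆ Finset.Icc 1 n) :
    (((Finset.Icc 1 n).powerset).filter (fun I => (I \ W).card + (t + 2) ≤ k)).card
      ≤ 2^(W.card) * ∑ z ∈ Finset.range (k - t - 1), (n - W.card).choose z := by
  classical
  have hform : ((((Finset.Icc 1 n) \ W).powerset).filter (fun Z => Z.card + (t+2) ≤ k)).card
      = ∑ z ∈ Finset.range (k - t - 1), (n - W.card).choose z := by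
    rw [card_powerset_filter_card_add_le, card_sdiff_of_subset hWicc, card_Icc_one]
    have : k + 1 - (t+2) = k - t - 1 := by omega
    rw [this]
  have hprod : (W.powerset ×ˢ ((((Finset.Icc 1 n) \ W).powerset).filter
      (fun Z => Z.card + (t+2) ≤ k))).card
      = 2^(W.card) * ∑ z ∈ Finset.range (k - t - 1), (n - W.card).choose z := by
    rw [card_product, card_powerset, hform]
  rw [← hprod]
  apply Finset.card_le_card_of_injOn (fun I => (I ∩ W, I \ W))
  · intro I hI
    rw [Finset.mem_coe, mem_filter, mem_powerset] at hI
    rw [Finset.mem_coe, mem_product]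
    constructor
    · rw [mem_powerset]; exact inter_subset_right
    · rw [mem_filter, mem_powerset]
      exact ⟨sdiff_subset_sdiff hI.1 le_rfl, hI.2⟩
  · intro I hI I' hI' heq
    simp only [Prod.mk.injEq] at heq
    have h1 : I = (I ∩ W) ∪ (I \ W) := by
      ext x
      simp only [mem_union, mem_inter, mem_sdiff]
      by_cases hx : x ∈ W <;> tauto
    have h2 : I' = (I' ∩ W) ∪ (I' \ W) := by
      ext x
      simp only [mem_union, mem_inter, mem_sdiff]
      by_cases hx : x ∈ W <;> tauto
    rw [h1, h2, heq.1, heq.2]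

lemma Hcase_card_le (n k t : ℕ) (S : Finset (Finset ℕ)) (W S0 : Finset ℕ)
    (hSsub : S ⊆ (Finset.Icc 1 n).powersetCard k)
    (hSint : tIntersecting t S)
    (hS0icc : S0 ⊆ Finset.Icc 1 n) (hS0c : S0.card = t)
    (hWicc : W ⊆ Finset.Icc 1 n)
    (hWmin : ∀ T, T ⊆ Finset.Icc 1 n → TransOf t S T →
      (∀ T'' ⊆ T, TransOf t S T'' → T'' = T) → T.card ≤ k → T ⊆ W)
    (hH : ∀ A ∈ S, S0 ⊆ A ∨ (∀ T ⊆ A, TransOf t S T → t + 2 ≤ T.card)) :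
    (interFam S).card ≤ ∑ z ∈ Finset.range (k - t), (n - t).choose z
      + 2^(W.card) * ∑ z ∈ Finset.range (k - t - 1), (n - W.card).choose z := by
  classical
  set J1 := ((Finset.Icc 1 n).powerset).filter (fun I => S0 ⊆ I ∧ I.card + 1 ≤ k) with hJ1
  set J2 := ((Finset.Icc 1 n).powerset).filter (fun I => (I \ W).card + (t + 2) ≤ k) with hJ2
  have hsub : interFam S ⊆ J1 ∪ J2 := by
    intro I hI
    rw [mem_interFam] at hI
    obtain ⟨A, hA, B, hB, hne, rfl⟩ := hI
    have hAm := Finset.mem_powersetCard.mp (hSsub hA)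
    have hBm := Finset.mem_powersetCard.mp (hSsub hB)
    have hIicc : A ∩ B ⊆ Finset.Icc 1 n := inter_subset_left.trans hAm.1
    have hIcard : (A ∩ B).card + 1 ≤ k := card_inter_lt_of_ne hAm.2 hBm.2 hne
    have key : ∀ C ∈ S, C ⊆ Finset.Icc 1 n → C.card = k → (A ∩ B) ⊆ C →
        (∀ T ⊆ C, TransOf t S T → t + 2 ≤ T.card) → (A ∩ B) ∈ J2 := by
      intro C hC hCicc hCcard hIC hbad
      have hCtrans : TransOf t S C := fun B' hB' => hSint C hC B' hB'
      obtain ⟨T', hT'C, hT'tr, hT'min⟩ := exists_minimal_trans hCtrans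
      have hT2 : t + 2 ≤ T'.card := hbad T' hT'C hT'tr
      have hT'W : T' ⊆ W := hWmin T' (hT'C.trans hCicc) hT'tr hT'min
        (hCcard ▸ card_le_card hT'C)
      have hIW : (A ∩ B) \ W ⊆ C \ T' := sdiff_subset_sdiff hIC hT'W
      have h1 := card_le_card hIW
      rw [card_sdiff_of_subset hT'C, hCcard] at h1
      have hT'le : T'.card ≤ k := by rw [← hCcard]; exact card_le_card hT'C
      rw [hJ2, mem_filter, mem_powerset]
      constructor
      · exact hIicc
      · omega
    rw [mem_union]
    rcases hH A hA with hA1 | hA2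
    · rcases hH B hB with hB1 | hB2
      · left
        rw [hJ1, mem_filter, mem_powerset]
        exact ⟨hIicc, subset_inter hA1 hB1, hIcard⟩
      · exact Or.inr (key B hB hBm.1 hBm.2 inter_subset_right hB2)
    · exact Or.inr (key A hA hAm.1 hAm.2 inter_subset_left hA2)
  calc (interFam S).card ≤ (J1 ∪ J2).card := card_le_card hsub
    _ ≤ J1.card + J2.card := card_union_le _ _
    _ ≤ _ := by
        rw [hJ1, card_J1_eq n k t S0 hS0icc hS0c]
        exact Nat.add_le_add_left (card_J2_le n k t W hWicc) _


theorem stmt0 :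
    ∀ t : ℕ, 1 ≤ t → ∀ k : ℕ, t + 1 ≤ k →
      ∃ N : ℕ, ∀ n : ℕ, N ≤ n →
        ∀ F ⊆ (Finset.Icc 1 n).powersetCard k, tIntersecting t F →
          (interFam F).card ≤ (interFam (At n k t)).card := by
  intro t ht k hk
  classical
  set w0 := k * (k.choose t)^k with hw0
  refine ⟨2^(w0+t+2)*k*k + 10*(k+t+1), ?_⟩
  intro n hn F hF hFint
  have hn1 : 2*k+2*t+2 ≤ n := by omega
  have hn2 : 3*k + t + 2 ≤ n := by omega
  have hn3 : t+2 ≤ n := by omega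
  have hn4 : 5*k + 2*t + 9 ≤ n := by omega
  have hnBig : 2^(w0+t+2)*k*k ≤ n := by omega
  -- saturate
  obtain ⟨S, hFS, hSsub, hSint, hsat⟩ := exists_saturated n k t F hF hFint
  have hScard : ∀ A ∈ S, A ⊆ Finset.Icc 1 n ∧ A.card = k := by
    intro A hA
    have := hSsub hA
    rwa [Finset.mem_powersetCard] at this
  -- target lower bound
  set Qn := ∑ z ∈ Finset.range (k - t), (n-(t+2)).choose z with hQn
  have hlow : (t+2).choose t * Qn ≤ (interFam (At n k t)).card := by
    calc (t+2).choose t * Qn ≤ (Xset n k t (Finset.Icc 1 (t+2))).card := by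
          have := card_X_lower n k t hn3
          rw [Xset]
          exact this
      _ ≤ (interFam (At n k t)).card :=
          card_le_card (Xset_subset_interFam_At n k t hk (by omega))
  have hstep1 : (interFam F).card ≤ (interFam S).card := card_le_card (interFam_mono hFS)
  rcases dichotomy n k t S ht hk hn1 hSsub hSint hsat with
    ⟨S0, hS0icc, hS0c, hH⟩ | ⟨Y, hYicc, hYc, hYtr⟩
  · -- H-case
    obtain ⟨W, hWicc, hWcard, hWmin⟩ := exists_W n k t S (by omega) hScard
    have hbound := Hcase_card_le n k t S W S0 hSsub hSint hS0icc hS0c hWicc hWmin hH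
    set m := k - t - 1 with hm
    have hkt : k - t = m + 1 := by omega
    have hJ1b : ∑ z ∈ Finset.range (k-t), (n-t).choose z ≤ 2 * Qn := by
      rw [hQn, hkt]
      have e1 : n - t = (n - (t+2)) + 2 := by omega
      rw [e1]
      exact sum_choose_add_two_le (n-(t+2)) m (by omega)
    have hJ2b : 2^(W.card) * ∑ z ∈ Finset.range m, (n - W.card).choose z ≤ Qn := by
      have hc1 : 2^(W.card) * ∑ z ∈ Finset.range m, (n - W.card).choose z
          ≤ 2^w0 * ∑ z ∈ Finset.range m, n.choose z := by
        apply Nat.mul_le_mul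
        · exact Nat.pow_le_pow_right (by omega) hWcard
        · apply Finset.sum_le_sum
          intro z hz
          exact Nat.choose_le_choose z (by omega)
      have hc2 : 2^w0 * ∑ z ∈ Finset.range m, n.choose z ≤ (n-(t+2)).choose m := by
        have e2 : (n - (t+2)) + (t+2) = n := by omega
        have cond2 : 2^w0 * m * m * 2^(t+2) + m ≤ (n-(t+2)) + (t+2) + 1 := by
          have e3 : 2^w0 * m * m * 2^(t+2) = 2^(w0+t+2)*(m*m) := by
            rw [pow_add]; ring
          have e4 : 2^(w0+t+2)*(m*m) ≤ 2^(w0+t+2)*(k*k) := by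
            apply Nat.mul_le_mul_left
            exact Nat.mul_le_mul (by omega) (by omega)
          have e5 : 2^(w0+t+2)*(k*k) = 2^(w0+t+2)*k*k := by ring
          omega
        calc 2^w0 * ∑ z ∈ Finset.range m, n.choose z
            = 2^w0 * ∑ z ∈ Finset.range m, ((n-(t+2)) + (t+2)).choose z := by rw [e2]
          _ ≤ (n-(t+2)).choose m := junk_bound (n-(t+2)) (t+2) m (2^w0) (by omega) cond2
      have hc3 : (n-(t+2)).choose m ≤ Qn := by
        rw [hQn, hkt]
        apply Finset.single_le_sum (f := fun z => (n-(t+2)).choose z)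
        · intro i _; exact Nat.zero_le _
        · rw [Finset.mem_range]; omega
      omega
    have h3Q : 3 * Qn ≤ (t+2).choose t * Qn :=
      Nat.mul_le_mul_right _ (three_le_choose t ht)
    omega
  · -- Y-case
    have hY1 : (interFam S).card ≤ (Xset n k t Y).card :=
      card_le_card (interFam_subset_Xset_Y n k t S Y hSsub hYc hYtr)
    have hY2 : (Xset n k t Y).card ≤ (Xset n k t (Finset.Icc 1 (t+2))).card :=
      card_Xset_le_std n k t Y hYicc hYc hn3
    have hY3 : (Xset n k t (Finset.Icc 1 (t+2))).card ≤ (interFam (At n k t)).card :=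
      card_le_card (Xset_subset_interFam_At n k t hk (by omega))
    omega
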